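/- Let Y, B be real N×N matrices, J the matrix deleting the first row, v ∈ C^N a unit null vector of J(Y + iB), and w ∈ R^N the unit null vector of JB (assuming λ_1(B) > 0). Then 1 − |w^* v|^2 ≥ ‖JYw‖^2 / (‖JYw‖^2 + ‖J(Y + iB)‖^2), and hence inf_{θ∈[0,2π]} ‖Re(e^{iθ}v)‖^2 ≥ (1/5) · λ_1(B)^2 · ‖JYw‖^2 / (‖JY‖ + ‖B‖)^4. -/

import Mathlib

open Matrix

/-- Euclidean norm of a real vector. -/
noncomputable def rnorm {n : Type*} [Fintype n] (v : n → ℝ) : ℝ :=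
  Real.sqrt (∑ i, v i ^ 2)

/-- Euclidean norm of a complex vector. -/
noncomputable def cnorm {n : Type*} [Fintype n] (v : n → ℂ) : ℝ :=
  Real.sqrt (∑ i, Complex.normSq (v i))

/-- Operator norm of a real matrix. -/
noncomputable def ropNorm {m n : Type*} [Fintype m] [Fintype n] (M : Matrix m n ℝ) : ℝ :=
  sSup {c | ∃ v : n → ℝ, rnorm v ≤ 1 ∧ c = rnorm (M.mulVec v)}

/-- Operator norm of a complex matrix. -/
noncomputable def copNorm {m n : Type*} [Fintype m] [Fintype n] (M : Matrix m n ℂ) : ℝ :=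
  sSup {c | ∃ v : n → ℂ, cnorm v ≤ 1 ∧ c = cnorm (M.mulVec v)}

/-- Smallest singular value of a real square matrix. -/
noncomputable def smin {n : Type*} [Fintype n] (M : Matrix n n ℝ) : ℝ :=
  sInf {c | ∃ v : n → ℝ, rnorm v = 1 ∧ c = rnorm (M.mulVec v)}

/-- The `(N-1) × N` matrix deleting the first row. -/
def delRow (N : ℕ) (R : Type*) [Zero R] [One R] : Matrix (Fin (N - 1)) (Fin N) R :=
  fun i j => if (j : ℕ) = (i : ℕ) + 1 then 1 else 0

section Aux
variable {n m : Type*} [Fintype n] [Fintype m]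

lemma rnorm_nonneg (v : n → ℝ) : 0 ≤ rnorm v := Real.sqrt_nonneg _
lemma cnorm_nonneg (v : n → ℂ) : 0 ≤ cnorm v := Real.sqrt_nonneg _

lemma rnorm_sq (v : n → ℝ) : rnorm v ^ 2 = ∑ i, v i ^ 2 :=
  Real.sq_sqrt (Finset.sum_nonneg fun i _ => sq_nonneg _)

lemma cnorm_sq (v : n → ℂ) : cnorm v ^ 2 = ∑ i, Complex.normSq (v i) :=
  Real.sq_sqrt (Finset.sum_nonneg fun i _ => Complex.normSq_nonneg _)

lemma rnorm_zero : rnorm (0 : n → ℝ) = 0 := by simp [rnorm]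
lemma cnorm_zero : cnorm (0 : n → ℂ) = 0 := by simp [cnorm]

lemma rnorm_le_of_sq_le {v : n → ℝ} {c : ℝ} (hc : 0 ≤ c) (h : rnorm v ^ 2 ≤ c ^ 2) :
    rnorm v ≤ c := by
  nlinarith [rnorm_nonneg v]

lemma cnorm_le_of_sq_le {v : n → ℂ} {c : ℝ} (hc : 0 ≤ c) (h : cnorm v ^ 2 ≤ c ^ 2) :
    cnorm v ≤ c := by
  nlinarith [cnorm_nonneg v]

lemma rnorm_smul (c : ℝ) (v : n → ℝ) : rnorm (c • v) = |c| * rnorm v := by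
  simp only [rnorm, Pi.smul_apply, smul_eq_mul, mul_pow, ← Finset.mul_sum]
  rw [Real.sqrt_mul (sq_nonneg c), Real.sqrt_sq_eq_abs]

lemma cnorm_smul (c : ℂ) (v : n → ℂ) : cnorm (c • v) = ‖c‖ * cnorm v := by
  simp only [cnorm, Pi.smul_apply, smul_eq_mul, Complex.normSq_mul, ← Finset.mul_sum]
  rw [Real.sqrt_mul (Complex.normSq_nonneg c), Complex.norm_def]

lemma rnorm_eq_zero {v : n → ℝ} (h : rnorm v = 0) : v = 0 := by
  have h2 : (∑ i, v i ^ 2) = 0 := by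
    have := rnorm_sq v; rw [h] at this; simpa using this.symm
  funext i
  have := (Finset.sum_eq_zero_iff_of_nonneg (fun i _ => sq_nonneg (v i))).1 h2 i (Finset.mem_univ i)
  exact pow_eq_zero_iff (by norm_num) |>.1 this

lemma cnorm_eq_zero {v : n → ℂ} (h : cnorm v = 0) : v = 0 := by
  have h2 : (∑ i, Complex.normSq (v i)) = 0 := by
    have := cnorm_sq v; rw [h] at this; simpa using this.symm
  funext i
  have := (Finset.sum_eq_zero_iff_of_nonneg (fun i _ => Complex.normSq_nonneg (v i))).1 h2 i
    (Finset.mem_univ i)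
  exact Complex.normSq_eq_zero.1 this

/-- Cauchy–Schwarz consequence: Frobenius bound, real case. -/
lemma rnorm_mulVec_le_frob (M : Matrix m n ℝ) (v : n → ℝ) :
    rnorm (M.mulVec v) ≤ Real.sqrt (∑ i, ∑ j, M i j ^ 2) * rnorm v := by
  rw [rnorm, rnorm, ← Real.sqrt_mul (by positivity)]
  apply Real.sqrt_le_sqrt
  rw [Finset.sum_mul]
  apply Finset.sum_le_sum
  intro i _
  simpa [Matrix.mulVec, dotProduct] using
    Finset.sum_mul_sq_le_sq_mul_sq Finset.univ (fun j => M i j) v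

/-- Frobenius bound, complex case. -/
lemma cnorm_mulVec_le_frob (M : Matrix m n ℂ) (v : n → ℂ) :
    cnorm (M.mulVec v) ≤ Real.sqrt (∑ i, ∑ j, Complex.normSq (M i j)) * cnorm v := by
  rw [cnorm, cnorm, ← Real.sqrt_mul (x := ∑ i, ∑ j, Complex.normSq (M i j)) (Finset.sum_nonneg fun i _ =>
    Finset.sum_nonneg fun j _ => Complex.normSq_nonneg _)]
  apply Real.sqrt_le_sqrt
  rw [Finset.sum_mul]
  apply Finset.sum_le_sum
  intro i _
  have h1 : ‖M.mulVec v i‖ ≤ ∑ j, ‖M i j‖ * ‖v j‖ := by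
    simpa [Matrix.mulVec, dotProduct, norm_mul] using
      norm_sum_le Finset.univ (fun j => M i j * v j)
  have h2 : (∑ j, ‖M i j‖ * ‖v j‖) ^ 2 ≤
      (∑ j, ‖M i j‖ ^ 2) * ∑ j, ‖v j‖ ^ 2 :=
    Finset.sum_mul_sq_le_sq_mul_sq Finset.univ _ _
  have h3 : Complex.normSq (M.mulVec v i) ≤
      (∑ j, ‖M i j‖ ^ 2) * ∑ j, ‖v j‖ ^ 2 := by
    rw [← Complex.sq_norm]
    refine le_trans ?_ h2
    have := norm_nonneg (M.mulVec v i)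
    nlinarith [Finset.sum_nonneg (fun j (_ : j ∈ Finset.univ) =>
      mul_nonneg (norm_nonneg (M i j)) (norm_nonneg (v j)))]
  simpa [Complex.sq_norm] using h3

end Aux

section OpAux
variable {n m : Type*} [Fintype n] [Fintype m]

lemma ropNorm_bddAbove (M : Matrix m n ℝ) :
    BddAbove {c | ∃ v : n → ℝ, rnorm v ≤ 1 ∧ c = rnorm (M.mulVec v)} := by
  refine ⟨Real.sqrt (∑ i, ∑ j, M i j ^ 2), ?_⟩
  rintro c ⟨v, hv, rfl⟩
  calc rnorm (M.mulVec v) ≤ Real.sqrt (∑ i, ∑ j, M i j ^ 2) * rnorm v :=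
        rnorm_mulVec_le_frob M v
    _ ≤ Real.sqrt (∑ i, ∑ j, M i j ^ 2) * 1 := by
        exact mul_le_mul_of_nonneg_left hv (Real.sqrt_nonneg _)
    _ = _ := mul_one _

lemma copNorm_bddAbove (M : Matrix m n ℂ) :
    BddAbove {c | ∃ v : n → ℂ, cnorm v ≤ 1 ∧ c = cnorm (M.mulVec v)} := by
  refine ⟨Real.sqrt (∑ i, ∑ j, Complex.normSq (M i j)), ?_⟩
  rintro c ⟨v, hv, rfl⟩
  calc cnorm (M.mulVec v) ≤ Real.sqrt (∑ i, ∑ j, Complex.normSq (M i j)) * cnorm v :=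
        cnorm_mulVec_le_frob M v
    _ ≤ Real.sqrt (∑ i, ∑ j, Complex.normSq (M i j)) * 1 :=
        mul_le_mul_of_nonneg_left hv (Real.sqrt_nonneg _)
    _ = _ := mul_one _

lemma le_ropNorm (M : Matrix m n ℝ) (v : n → ℝ) (hv : rnorm v ≤ 1) :
    rnorm (M.mulVec v) ≤ ropNorm M :=
  le_csSup (ropNorm_bddAbove M) ⟨v, hv, rfl⟩

lemma le_copNorm (M : Matrix m n ℂ) (v : n → ℂ) (hv : cnorm v ≤ 1) :
    cnorm (M.mulVec v) ≤ copNorm M :=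
  le_csSup (copNorm_bddAbove M) ⟨v, hv, rfl⟩

lemma ropNorm_nonneg (M : Matrix m n ℝ) : 0 ≤ ropNorm M := by
  have := le_ropNorm M 0 (by simp [rnorm_zero])
  simpa [Matrix.mulVec_zero, rnorm_zero] using this

lemma copNorm_nonneg (M : Matrix m n ℂ) : 0 ≤ copNorm M := by
  have := le_copNorm M 0 (by simp [cnorm_zero])
  simpa [Matrix.mulVec_zero, cnorm_zero] using this

lemma rnorm_mulVec_le (M : Matrix m n ℝ) (v : n → ℝ) :
    rnorm (M.mulVec v) ≤ ropNorm M * rnorm v := by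
  by_cases hv : rnorm v = 0
  · rw [rnorm_eq_zero hv]
    simp [Matrix.mulVec_zero, rnorm_zero, hv]
  · have hv' : 0 < rnorm v := lt_of_le_of_ne (rnorm_nonneg v) (Ne.symm hv)
    have h1 : rnorm ((rnorm v)⁻¹ • v) = 1 := by
      rw [rnorm_smul, abs_of_pos (inv_pos.2 hv'), inv_mul_cancel₀ hv]
    have h2 := le_ropNorm M ((rnorm v)⁻¹ • v) (le_of_eq h1)
    rw [Matrix.mulVec_smul, rnorm_smul, abs_of_pos (inv_pos.2 hv')] at h2
    calc rnorm (M.mulVec v) = rnorm v * ((rnorm v)⁻¹ * rnorm (M.mulVec v)) := by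
          field_simp
      _ ≤ rnorm v * ropNorm M := mul_le_mul_of_nonneg_left h2 hv'.le
      _ = ropNorm M * rnorm v := mul_comm _ _

lemma cnorm_mulVec_le (M : Matrix m n ℂ) (v : n → ℂ) :
    cnorm (M.mulVec v) ≤ copNorm M * cnorm v := by
  by_cases hv : cnorm v = 0
  · rw [cnorm_eq_zero hv]
    simp [Matrix.mulVec_zero, cnorm_zero, hv]
  · have hv' : 0 < cnorm v := lt_of_le_of_ne (cnorm_nonneg v) (Ne.symm hv)
    have h1 : cnorm (((cnorm v : ℝ) : ℂ)⁻¹ • v) = 1 := by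
      rw [cnorm_smul, norm_inv, Complex.norm_real, Real.norm_eq_abs, abs_of_pos hv', inv_mul_cancel₀ hv]
    have h2 := le_copNorm M _ (le_of_eq h1)
    rw [Matrix.mulVec_smul, cnorm_smul, norm_inv, Complex.norm_real, Real.norm_eq_abs, abs_of_pos hv'] at h2
    calc cnorm (M.mulVec v) = cnorm v * ((cnorm v)⁻¹ * cnorm (M.mulVec v)) := by
          field_simp
      _ ≤ cnorm v * copNorm M := mul_le_mul_of_nonneg_left h2 hv'.le
      _ = copNorm M * cnorm v := mul_comm _ _

lemma copNorm_le (M : Matrix m n ℂ) {C : ℝ}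
    (h : ∀ v : n → ℂ, cnorm v ≤ 1 → cnorm (M.mulVec v) ≤ C) : copNorm M ≤ C := by
  have hne : {c | ∃ v : n → ℂ, cnorm v ≤ 1 ∧ c = cnorm (M.mulVec v)}.Nonempty :=
    ⟨cnorm (M.mulVec 0), ⟨0, by simp [cnorm_zero], rfl⟩⟩
  apply csSup_le hne
  rintro c ⟨v, hv, rfl⟩
  exact h v hv

lemma smin_bddBelow (M : Matrix n n ℝ) :
    BddBelow {c | ∃ v : n → ℝ, rnorm v = 1 ∧ c = rnorm (M.mulVec v)} :=
  ⟨0, by rintro c ⟨v, _, rfl⟩; exact rnorm_nonneg _⟩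

lemma smin_le (M : Matrix n n ℝ) (v : n → ℝ) (hv : rnorm v = 1) :
    smin M ≤ rnorm (M.mulVec v) :=
  csInf_le (smin_bddBelow M) ⟨v, hv, rfl⟩

lemma smin_mul_le (M : Matrix n n ℝ) (v : n → ℝ) (hM : 0 ≤ smin M) :
    smin M * rnorm v ≤ rnorm (M.mulVec v) := by
  by_cases hv : rnorm v = 0
  · rw [hv, mul_zero]; exact rnorm_nonneg _
  · have hv' : 0 < rnorm v := lt_of_le_of_ne (rnorm_nonneg v) (Ne.symm hv)
    have h1 : rnorm ((rnorm v)⁻¹ • v) = 1 := by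
      rw [rnorm_smul, abs_of_pos (inv_pos.2 hv'), inv_mul_cancel₀ hv]
    have h2 := smin_le M _ h1
    rw [Matrix.mulVec_smul, rnorm_smul, abs_of_pos (inv_pos.2 hv')] at h2
    calc smin M * rnorm v = rnorm v * smin M := mul_comm _ _
      _ ≤ rnorm v * ((rnorm v)⁻¹ * rnorm (M.mulVec v)) := mul_le_mul_of_nonneg_left h2 hv'.le
      _ = rnorm (M.mulVec v) := by field_simp

end OpAux

section DelAux
variable {n : ℕ} {m : Type*} [Fintype m]

lemma delRow_mul_mulVec {R : Type*} [CommRing R] (M : Matrix (Fin (n+1)) (Fin (n+1)) R)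
    (x : Fin (n+1) → R) (i : Fin n) :
    ((delRow (n+1) R) * M).mulVec x i = M.mulVec x i.succ := by
  simp only [Matrix.mulVec, dotProduct, Matrix.mul_apply, delRow]
  congr 1
  funext j
  rw [Finset.sum_congr rfl (fun k _ => ?_), Finset.sum_ite_eq' Finset.univ i.succ (fun k => M k j)]
  · simp
  · congr 1
    simp [Fin.ext_iff, eq_comm]

lemma rnorm_del_sq (M : Matrix (Fin (n+1)) (Fin (n+1)) ℝ) (x : Fin (n+1) → ℝ) :
    rnorm (((delRow (n+1) ℝ) * M).mulVec x) ^ 2 = rnorm (M.mulVec x) ^ 2 - M.mulVec x 0 ^ 2 := by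
  rw [rnorm_sq, rnorm_sq, Fin.sum_univ_succ]
  simp only [delRow_mul_mulVec]
  have h : ∑ i : Fin (n + 1 - 1), (M.mulVec x) i.succ ^ 2
      = ∑ i : Fin n, (M.mulVec x) i.succ ^ 2 := by
    refine Finset.sum_equiv (finCongr (by norm_num)) (by simp) ?_
    intro i _
    congr 1
  rw [h]
  ring

lemma rnorm_del_le (M : Matrix (Fin (n+1)) (Fin (n+1)) ℝ) (x : Fin (n+1) → ℝ) :
    rnorm (((delRow (n+1) ℝ) * M).mulVec x) ≤ rnorm (M.mulVec x) := by
  apply rnorm_le_of_sq_le (rnorm_nonneg _)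
  rw [rnorm_del_sq]
  nlinarith [sq_nonneg (M.mulVec x 0)]

lemma map_mulVec_re (M : Matrix m (Fin (n+1)) ℝ) (u : Fin (n+1) → ℂ) (i : m) :
    ((M.map (fun x : ℝ => (x : ℂ))).mulVec u i).re = M.mulVec (fun j => (u j).re) i := by
  simp [Matrix.mulVec, dotProduct, Matrix.map_apply, Complex.re_sum,
    Complex.re_ofReal_mul]

lemma map_mulVec_im (M : Matrix m (Fin (n+1)) ℝ) (u : Fin (n+1) → ℂ) (i : m) :
    ((M.map (fun x : ℝ => (x : ℂ))).mulVec u i).im = M.mulVec (fun j => (u j).im) i := by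
  simp [Matrix.mulVec, dotProduct, Matrix.map_apply, Complex.im_sum,
    Complex.im_ofReal_mul]

lemma mulVec_map_coe (M : Matrix m (Fin (n+1)) ℝ) (x : Fin (n+1) → ℝ) :
    (M.map (fun a : ℝ => (a : ℂ))).mulVec (fun i => (x i : ℂ)) =
      fun i => ((M.mulVec x i : ℝ) : ℂ) := by
  funext i
  simp only [Matrix.mulVec, dotProduct, Matrix.map_apply]
  push_cast
  rfl

lemma cnorm_coe (x : Fin (n+1) → ℝ) : cnorm (fun i => (x i : ℂ)) = rnorm x := by
  simp [cnorm, rnorm, Complex.normSq_ofReal, sq]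

/-- expanding a squared sum against a unit vector -/
lemma sum_sub_mul_sq {N' : Type*} [Fintype N'] (x w : N' → ℝ) (c : ℝ)
    (hw : ∑ i, w i ^ 2 = 1) :
    ∑ i, (x i - c * w i) ^ 2 = ∑ i, x i ^ 2 - 2 * c * (∑ i, w i * x i) + c ^ 2 := by
  have h : ∀ i, (x i - c * w i) ^ 2
      = x i ^ 2 - (2 * c) * (w i * x i) + c ^ 2 * w i ^ 2 := by intro i; ring
  rw [Finset.sum_congr rfl (fun i _ => h i)]
  rw [Finset.sum_add_distrib, Finset.sum_sub_distrib, ← Finset.mul_sum, ← Finset.mul_sum, hw]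
  ring

end DelAux

section Main
open Complex

/-- Part 1, abstract form. -/
lemma part1_aux {m' N' : Type*} [Fintype m'] [Fintype N'] (A : Matrix m' N' ℂ)
    (w : N' → ℝ) (hw : rnorm w = 1) (g : m' → ℝ)
    (hAw : A.mulVec (fun i => (w i : ℂ)) = fun i => ((g i : ℝ) : ℂ))
    (u : N' → ℂ) (hu : cnorm u = 1) (hAu : A.mulVec u = 0) :
    rnorm g ^ 2 / (rnorm g ^ 2 + copNorm A ^ 2)
      ≤ 1 - Complex.normSq (∑ i, (w i : ℂ) * u i) := by
  have hw2 : (∑ i, w i ^ 2) = 1 := by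
    have := rnorm_sq w; rw [hw] at this; linarith [this.symm]
  have hu2 : (∑ i, Complex.normSq (u i)) = 1 := by
    have := cnorm_sq u; rw [hu] at this; linarith [this.symm]
  set c : ℂ := ∑ i, (w i : ℂ) * u i with hc
  set α : ℝ := ∑ i, w i * (u i).re with hα
  set β : ℝ := ∑ i, w i * (u i).im with hβ
  have hcre : c.re = α := by
    rw [hc, Complex.re_sum]
    exact Finset.sum_congr rfl fun i _ => by simp [Complex.re_ofReal_mul]
  have hcim : c.im = β := by
    rw [hc, Complex.im_sum]
    exact Finset.sum_congr rfl fun i _ => by simp [Complex.im_ofReal_mul]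
  have hnc : Complex.normSq c = α ^ 2 + β ^ 2 := by
    rw [Complex.normSq_apply, hcre, hcim]; ring
  set r : N' → ℂ := u - c • (fun i => ((w i : ℝ) : ℂ)) with hr
  have hr2 : cnorm r ^ 2 = 1 - Complex.normSq c := by
    rw [cnorm_sq]
    have h1 : ∀ i, Complex.normSq (r i)
        = ((u i).re - α * w i) ^ 2 + ((u i).im - β * w i) ^ 2 := by
      intro i
      simp only [hr, Pi.sub_apply, Pi.smul_apply, smul_eq_mul]
      rw [Complex.normSq_apply]
      simp [Complex.sub_re, Complex.sub_im, Complex.mul_re, Complex.mul_im, hcre, hcim]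
      ring
    rw [Finset.sum_congr rfl fun i _ => h1 i, Finset.sum_add_distrib,
      sum_sub_mul_sq (fun i => (u i).re) w α hw2, sum_sub_mul_sq (fun i => (u i).im) w β hw2,
      ← hα, ← hβ, hnc]
    have : ∑ i, ((u i).re ^ 2 + (u i).im ^ 2) = 1 := by
      rw [← hu2]; exact Finset.sum_congr rfl fun i _ => by rw [Complex.normSq_apply]; ring
    rw [Finset.sum_add_distrib] at this
    linarith [this]
  have hAr : A.mulVec r = fun i => -(c * ((g i : ℝ) : ℂ)) := by
    rw [hr, Matrix.mulVec_sub, hAu, Matrix.mulVec_smul, hAw]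
    funext i
    simp
  have hAr_norm : cnorm (A.mulVec r) ^ 2 = Complex.normSq c * rnorm g ^ 2 := by
    rw [hAr, cnorm_sq, rnorm_sq, Finset.mul_sum]
    exact Finset.sum_congr rfl fun i _ => by
      rw [Complex.normSq_neg, Complex.normSq_mul, Complex.normSq_ofReal]; ring
  have hkey : Complex.normSq c * rnorm g ^ 2 ≤ copNorm A ^ 2 * (1 - Complex.normSq c) := by
    have h := cnorm_mulVec_le A r
    have h2 : cnorm (A.mulVec r) ^ 2 ≤ (copNorm A * cnorm r) ^ 2 :=
      pow_le_pow_left₀ (cnorm_nonneg _) h 2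
    rw [hAr_norm, mul_pow, hr2] at h2
    exact h2
  have hnc1 : 1 - Complex.normSq c ≥ 0 := by
    have := sq_nonneg (cnorm r); rw [hr2] at this; linarith
  have ht : 0 ≤ rnorm g ^ 2 := sq_nonneg _
  by_cases hpos : 0 < rnorm g ^ 2 + copNorm A ^ 2
  · rw [div_le_iff₀ hpos]
    nlinarith [Complex.normSq_nonneg c, sq_nonneg (copNorm A)]
  · have h0 : rnorm g ^ 2 + copNorm A ^ 2 = 0 := by
      nlinarith [sq_nonneg (copNorm A)]
    rw [h0, div_zero]
    linarith

/-- Kernel restriction bound. -/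
lemma kernel_bound {n : ℕ} (B : Matrix (Fin (n+1)) (Fin (n+1)) ℝ) (w : Fin (n+1) → ℝ)
    (hw : rnorm w = 1) (hwnull : ((delRow (n+1) ℝ) * B).mulVec w = 0) (hB : 0 < smin B)
    (x : Fin (n+1) → ℝ) (hx : ∑ i, w i * x i = 0) :
    smin B * rnorm x ≤ rnorm (((delRow (n+1) ℝ) * B).mulVec x) := by
  have hw2 : (∑ i, w i ^ 2) = 1 := by
    have := rnorm_sq w; rw [hw] at this; linarith [this.symm]
  set y := B.mulVec x with hy
  set μ := B.mulVec w 0 with hμdef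
  have hWy : ∀ i : Fin n, B.mulVec w i.succ = 0 := by
    intro i
    have := congrFun hwnull i
    rwa [delRow_mul_mulVec, Pi.zero_apply] at this
  have hμ : μ ≠ 0 := by
    intro h
    have hBw : B.mulVec w = 0 := by
      funext j
      refine Fin.cases ?_ ?_ j
      · exact h
      · intro i; exact hWy i
    have h1 := smin_le B w hw
    rw [hBw, rnorm_zero] at h1
    linarith
  set z := x - (y 0 / μ) • w with hz
  have hBz : B.mulVec z = B.mulVec x - (y 0 / μ) • B.mulVec w := by
    rw [hz, Matrix.mulVec_sub, Matrix.mulVec_smul]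
  have hBz0 : B.mulVec z 0 = 0 := by
    rw [hBz]; simp only [Pi.sub_apply, Pi.smul_apply, smul_eq_mul, ← hy, ← hμdef]
    field_simp
    ring
  have hBzs : ∀ i : Fin n, B.mulVec z i.succ = y i.succ := by
    intro i
    rw [hBz]; simp only [Pi.sub_apply, Pi.smul_apply, smul_eq_mul, hWy i, ← hy]
    ring
  have h1 : rnorm (B.mulVec z) = rnorm (((delRow (n+1) ℝ) * B).mulVec x) := by
    unfold rnorm
    congr 1
    rw [Fin.sum_univ_succ, hBz0]
    have h : ∑ i : Fin (n + 1 - 1), (((delRow (n+1) ℝ) * B).mulVec x) i ^ 2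
        = ∑ i : Fin n, y i.succ ^ 2 := by
      refine Finset.sum_equiv (finCongr (by norm_num)) (by simp) ?_
      intro i _
      rw [delRow_mul_mulVec]
      congr 1
    rw [h, Finset.sum_congr rfl fun i _ => by rw [hBzs i]]
    ring
  have h2 : rnorm x ≤ rnorm z := by
    unfold rnorm
    apply Real.sqrt_le_sqrt
    have : ∑ i, z i ^ 2 = ∑ i, x i ^ 2 - 2 * (y 0 / μ) * (∑ i, w i * x i) + (y 0 / μ) ^ 2 := by
      rw [hz]
      exact sum_sub_mul_sq x w (y 0 / μ) hw2
    rw [this, hx]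
    nlinarith [sq_nonneg (y 0 / μ)]
  calc smin B * rnorm x ≤ smin B * rnorm z := mul_le_mul_of_nonneg_left h2 hB.le
    _ ≤ rnorm (B.mulVec z) := smin_mul_le B z hB.le
    _ = _ := h1

end Main

section Tri
variable {n m : Type*} [Fintype n] [Fintype m]

lemma rnorm_eq_norm (v : n → ℝ) : rnorm v = ‖(WithLp.equiv 2 (n → ℝ)).symm v‖ := by
  rw [EuclideanSpace.norm_eq]
  simp [rnorm, Real.norm_eq_abs, sq_abs]

lemma rnorm_sub_le (f g : n → ℝ) : rnorm (f - g) ≤ rnorm f + rnorm g := by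
  simp only [rnorm_eq_norm]
  exact norm_sub_le ((WithLp.equiv 2 (n → ℝ)).symm f) ((WithLp.equiv 2 (n → ℝ)).symm g)

lemma rnorm_add_le (f g : n → ℝ) : rnorm (f + g) ≤ rnorm f + rnorm g := by
  simp only [rnorm_eq_norm]
  exact norm_add_le ((WithLp.equiv 2 (n → ℝ)).symm f) ((WithLp.equiv 2 (n → ℝ)).symm g)

end Tri

section Comb
variable {n : ℕ}

lemma ropNorm_del_le (M : Matrix (Fin (n+1)) (Fin (n+1)) ℝ) :
    ropNorm ((delRow (n+1) ℝ) * M) ≤ ropNorm M := by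
  have hne : {c | ∃ x : Fin (n+1) → ℝ, rnorm x ≤ 1 ∧
      c = rnorm (((delRow (n+1) ℝ) * M).mulVec x)}.Nonempty :=
    ⟨_, ⟨0, by simp [rnorm_zero], rfl⟩⟩
  apply csSup_le hne
  rintro c ⟨x, hx, rfl⟩
  calc rnorm (((delRow (n+1) ℝ) * M).mulVec x) ≤ rnorm (M.mulVec x) := rnorm_del_le M x
    _ ≤ ropNorm M * rnorm x := rnorm_mulVec_le M x
    _ ≤ ropNorm M * 1 := mul_le_mul_of_nonneg_left hx (ropNorm_nonneg M)
    _ = ropNorm M := mul_one _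

lemma copNorm_comb_le {m : Type*} [Fintype m] (P Q : Matrix m (Fin (n+1)) ℝ) :
    copNorm (P.map (fun x : ℝ => (x : ℂ)) + Complex.I • Q.map (fun x : ℝ => (x : ℂ)))
      ≤ ropNorm P + ropNorm Q := by
  apply copNorm_le
  intro u hu
  set p := fun j => (u j).re with hp
  set q := fun j => (u j).im with hq
  have hpq : rnorm p ^ 2 + rnorm q ^ 2 ≤ 1 := by
    have h1 : cnorm u ^ 2 ≤ 1 := by nlinarith [cnorm_nonneg u]
    rw [cnorm_sq] at h1
    rw [rnorm_sq, rnorm_sq, ← Finset.sum_add_distrib]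
    refine le_trans (le_of_eq (Finset.sum_congr rfl fun i _ => ?_)) h1
    rw [Complex.normSq_apply]; ring
  have hsq : cnorm ((P.map (fun x : ℝ => (x : ℂ)) + Complex.I • Q.map (fun x : ℝ => (x : ℂ))).mulVec u) ^ 2
      = rnorm (P.mulVec p - Q.mulVec q) ^ 2 + rnorm (P.mulVec q + Q.mulVec p) ^ 2 := by
    rw [cnorm_sq, rnorm_sq, rnorm_sq, ← Finset.sum_add_distrib]
    refine Finset.sum_congr rfl fun i _ => ?_
    have h1 : (P.map (fun x : ℝ => (x : ℂ)) + Complex.I • Q.map (fun x : ℝ => (x : ℂ))).mulVec u i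
        = (P.map (fun x : ℝ => (x : ℂ))).mulVec u i
          + Complex.I * (Q.map (fun x : ℝ => (x : ℂ))).mulVec u i := by
      rw [Matrix.add_mulVec, Matrix.smul_mulVec]
      simp
    rw [h1, Complex.normSq_apply]
    simp only [Complex.add_re, Complex.add_im, Complex.mul_re, Complex.mul_im,
      Complex.I_re, Complex.I_im, map_mulVec_re, map_mulVec_im, Pi.sub_apply, Pi.add_apply]
    ring
  have hb1 : rnorm (P.mulVec p - Q.mulVec q) ≤ ropNorm P * rnorm p + ropNorm Q * rnorm q :=
    le_trans (rnorm_sub_le _ _) (add_le_add (rnorm_mulVec_le P p) (rnorm_mulVec_le Q q))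
  have hb2 : rnorm (P.mulVec q + Q.mulVec p) ≤ ropNorm P * rnorm q + ropNorm Q * rnorm p :=
    le_trans (rnorm_add_le _ _) (add_le_add (rnorm_mulVec_le P q) (rnorm_mulVec_le Q p))
  apply cnorm_le_of_sq_le (add_nonneg (ropNorm_nonneg P) (ropNorm_nonneg Q))
  rw [hsq]
  nlinarith [rnorm_nonneg p, rnorm_nonneg q, ropNorm_nonneg P, ropNorm_nonneg Q,
    rnorm_nonneg (P.mulVec p - Q.mulVec q), rnorm_nonneg (P.mulVec q + Q.mulVec p),
    sq_nonneg (rnorm p - rnorm q), sq_nonneg (rnorm p + rnorm q),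
    mul_nonneg (ropNorm_nonneg P) (ropNorm_nonneg Q)]

end Comb

set_option maxHeartbeats 1000000 in
/-- With `v` a unit null vector of `J(Y+iB)` and `w` the unit null vector of
`JB`: `1 - |w^*v|² ≥ ‖JYw‖²/(‖JYw‖² + ‖J(Y+iB)‖²)`, and hence
`inf_θ ‖Re(e^{iθ}v)‖² ≥ (1/5) λ₁(B)² ‖JYw‖² / (‖JY‖ + ‖B‖)⁴`. -/
theorem genuinely_complex_null_vector (N : ℕ) (hN : 1 ≤ N)
    (Y B : Matrix (Fin N) (Fin N) ℝ)
    (v : Fin N → ℂ) (hv : cnorm v = 1)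
    (hnull : ((delRow N ℂ) *
        (Y.map (fun x => (x : ℂ)) + Complex.I • B.map (fun x => (x : ℂ)))).mulVec v = 0)
    (w : Fin N → ℝ) (hw : rnorm w = 1)
    (hwnull : ((delRow N ℝ) * B).mulVec w = 0)
    (hB : 0 < smin B) :
    rnorm (((delRow N ℝ) * Y).mulVec w) ^ 2 /
        (rnorm (((delRow N ℝ) * Y).mulVec w) ^ 2 +
          copNorm ((delRow N ℂ) *
            (Y.map (fun x => (x : ℂ)) + Complex.I • B.map (fun x => (x : ℂ)))) ^ 2)
      ≤ 1 - Complex.normSq (∑ i, (w i : ℂ) * v i) ∧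
    (1 / 5) * smin B ^ 2 * rnorm (((delRow N ℝ) * Y).mulVec w) ^ 2 /
        (ropNorm ((delRow N ℝ) * Y) + ropNorm B) ^ 4
      ≤ sInf ((fun θ : ℝ => ∑ i, (Complex.exp (θ * Complex.I) * v i).re ^ 2) ''
          Set.Icc 0 (2 * Real.pi)) := by
  obtain ⟨n, rfl⟩ : ∃ n, N = n + 1 := ⟨N - 1, (Nat.succ_pred_eq_of_pos hN).symm⟩
  set Y1 := (delRow (n+1) ℝ) * Y with hY1
  set B1 := (delRow (n+1) ℝ) * B with hB1
  set A := (delRow (n+1) ℂ) *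
      (Y.map (fun x : ℝ => (x : ℂ)) + Complex.I • B.map (fun x : ℝ => (x : ℂ))) with hAdef
  have hdel : delRow (n+1) ℂ = (delRow (n+1) ℝ).map (fun x : ℝ => (x : ℂ)) := by
    ext i j
    simp [delRow, Matrix.map_apply, apply_ite (fun x : ℝ => (x : ℂ))]
  have hAeq : A = Y1.map (fun x : ℝ => (x : ℂ)) + Complex.I • B1.map (fun x : ℝ => (x : ℂ)) := by
    rw [hAdef, hdel, Matrix.mul_add, Matrix.mul_smul]
    congr 1
    · ext i j
      simp only [Matrix.mul_apply, Matrix.map_apply, hY1]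
      push_cast
      rfl
    · congr 1
      ext i j
      simp only [Matrix.mul_apply, Matrix.map_apply, hB1]
      push_cast
      rfl
  have hg : A.mulVec (fun i => ((w i : ℝ) : ℂ)) = fun i => ((Y1.mulVec w i : ℝ) : ℂ) := by
    rw [hAeq, Matrix.add_mulVec, Matrix.smul_mulVec, mulVec_map_coe, mulVec_map_coe, hwnull]
    funext i
    simp
  have hpart1 := part1_aux A w hw (Y1.mulVec w) hg v hv hnull
  refine ⟨hpart1, ?_⟩
  -- Part 2
  set s := smin B with hsdef
  set a0 := ropNorm Y1 with ha0def
  set b0 := ropNorm B with hb0def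
  set t := rnorm (Y1.mulVec w) ^ 2 with htdef
  have ht0 : 0 ≤ t := sq_nonneg _
  have ha0 : 0 ≤ a0 := ropNorm_nonneg _
  have hsb : s ≤ b0 := by
    refine le_trans (smin_le B w hw) ?_
    have := rnorm_mulVec_le B w
    rwa [hw, mul_one] at this
  have hb0pos : 0 < b0 := lt_of_lt_of_le hB hsb
  have hsum_pos : 0 < a0 + b0 := by linarith
  have hApB : copNorm A ≤ a0 + b0 := by
    rw [hAeq]
    refine le_trans (copNorm_comb_le Y1 B1) ?_
    have : ropNorm B1 ≤ b0 := ropNorm_del_le B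
    linarith
  have hcopA : 0 ≤ copNorm A := copNorm_nonneg A
  have ht_le : t ≤ (a0 + b0) ^ 2 := by
    have h1 : rnorm (Y1.mulVec w) ≤ a0 := by
      have := rnorm_mulVec_le Y1 w
      rwa [hw, mul_one] at this
    calc t = rnorm (Y1.mulVec w) ^ 2 := htdef
      _ ≤ a0 ^ 2 := pow_le_pow_left₀ (rnorm_nonneg _) h1 2
      _ ≤ (a0 + b0) ^ 2 := pow_le_pow_left₀ ha0 (by linarith) 2
  set P := (a0 + b0) ^ 2 with hP
  have hPpos : 0 < P := by rw [hP]; exact pow_pos hsum_pos 2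
  have hsP : s ^ 2 ≤ P := by rw [hP]; exact pow_le_pow_left₀ hB.le (by linarith) 2
  have ha0P : a0 ^ 2 ≤ P := by rw [hP]; exact pow_le_pow_left₀ ha0 (by linarith) 2
  have hsmin_s : 0 < s := hB
  have hBsmin : 0 < smin B := by rw [← hsdef]; exact hB
  clear_value s a0 b0 t P
  -- key bound for any unit null vector
  have key : ∀ u : Fin (n+1) → ℂ, cnorm u = 1 → A.mulVec u = 0 →
      1 / 5 * s ^ 2 * t / (a0 + b0) ^ 4 ≤ ∑ i, (u i).re ^ 2 := by
    intro u hu hAu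
    set a := fun j => (u j).re with ha
    set b := fun j => (u j).im with hb'
    have hw2 : (∑ i, w i ^ 2) = 1 := by
      have := rnorm_sq w; rw [hw] at this; linarith [this.symm]
    have hab : rnorm a ^ 2 + rnorm b ^ 2 = 1 := by
      have h1 : cnorm u ^ 2 = 1 := by rw [hu]; norm_num
      rw [cnorm_sq] at h1
      rw [rnorm_sq, rnorm_sq, ← Finset.sum_add_distrib]
      rw [← h1]
      exact Finset.sum_congr rfl fun i _ => by rw [Complex.normSq_apply]; ring
    -- real and imaginary parts of the null equation
    have hcomp : ∀ i, Y1.mulVec a i - B1.mulVec b i = 0 := by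
      intro i
      have h := congrFun hAu i
      rw [hAeq, Matrix.add_mulVec, Matrix.smul_mulVec] at h
      have h2 := congrArg Complex.re h
      simpa [Complex.add_re, Complex.mul_re, Complex.I_re, Complex.I_im,
        map_mulVec_re, map_mulVec_im, sub_eq_add_neg, ha, hb'] using h2
    have hYa : Y1.mulVec a = B1.mulVec b := funext fun i => by linarith [hcomp i]
    set α := ∑ i, w i * a i with hαdef
    set β := ∑ i, w i * b i with hβdef
    -- the part-1 inequality for u
    have hp1 := part1_aux A w hw (Y1.mulVec w) hg u hu hAu
    have hnsq : Complex.normSq (∑ i, (w i : ℂ) * u i) = α ^ 2 + β ^ 2 := by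
      rw [Complex.normSq_apply, Complex.re_sum, Complex.im_sum]
      rw [Finset.sum_congr rfl (fun i _ => Complex.re_ofReal_mul (w i) (u i)),
        Finset.sum_congr rfl (fun i _ => Complex.im_ofReal_mul (w i) (u i))]
      rw [← hαdef, ← hβdef]; ring
    rw [hnsq, ← htdef] at hp1
    generalize hcA : copNorm A = cA at hp1 hApB hcopA
    have hXP : t + cA ^ 2 ≤ 2 * P := by
      have h2 : cA ^ 2 ≤ P := by rw [hP]; exact pow_le_pow_left₀ hcopA hApB 2
      linarith
    set a' := a - α • w with ha'
    set b' := b - β • w with hb''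
    have hna' : rnorm a' ^ 2 = rnorm a ^ 2 - α ^ 2 := by
      rw [rnorm_sq, rnorm_sq]
      have : ∑ i, a' i ^ 2 = ∑ i, (a i - α * w i) ^ 2 := by
        exact Finset.sum_congr rfl fun i _ => by rw [ha']; simp
      rw [this, sum_sub_mul_sq a w α hw2, ← hαdef]
      ring
    have hnb' : rnorm b' ^ 2 = rnorm b ^ 2 - β ^ 2 := by
      rw [rnorm_sq, rnorm_sq]
      have : ∑ i, b' i ^ 2 = ∑ i, (b i - β * w i) ^ 2 := by
        exact Finset.sum_congr rfl fun i _ => by rw [hb'']; simp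
      rw [this, sum_sub_mul_sq b w β hw2, ← hβdef]
      ring
    have hwb' : ∑ i, w i * b' i = 0 := by
      have : ∑ i, w i * b' i = ∑ i, (w i * b i - β * w i ^ 2) := by
        exact Finset.sum_congr rfl fun i _ => by rw [hb'']; simp; ring
      rw [this, Finset.sum_sub_distrib, ← Finset.mul_sum, hw2, ← hβdef]
      ring
    have hJBb' : B1.mulVec b' = Y1.mulVec a := by
      rw [hb'', Matrix.mulVec_sub, Matrix.mulVec_smul, hwnull, ← hYa]
      simp
    have hkb : s * rnorm b' ≤ a0 * rnorm a := by
      have h1 := kernel_bound B w hw hwnull hBsmin b' hwb'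
      rw [← hB1, hJBb', ← hsdef] at h1
      refine le_trans h1 ?_
      have := rnorm_mulVec_le Y1 a
      rwa [← ha0def] at this
    have hkb2 : s ^ 2 * rnorm b' ^ 2 ≤ a0 ^ 2 * rnorm a ^ 2 := by
      have h2 := pow_le_pow_left₀ (mul_nonneg hsmin_s.le (rnorm_nonneg b')) hkb 2
      rwa [mul_pow, mul_pow] at h2
    -- combine
    have hDiv : t ≤ (t + cA ^ 2) * (rnorm a' ^ 2 + rnorm b' ^ 2) := by
      have hR : 1 - (α ^ 2 + β ^ 2) = rnorm a' ^ 2 + rnorm b' ^ 2 := by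
        rw [hna', hnb']; linarith [hab]
      rw [hR] at hp1
      by_cases hX : 0 < t + cA ^ 2
      · calc t = t / (t + cA ^ 2) * (t + cA ^ 2) := by rw [div_mul_cancel₀ _ hX.ne']
          _ ≤ (rnorm a' ^ 2 + rnorm b' ^ 2) * (t + cA ^ 2) :=
              mul_le_mul_of_nonneg_right hp1 hX.le
          _ = _ := mul_comm _ _
      · have hXle := not_lt.1 hX
        have ht00 : t = 0 := by linarith only [hXle, ht0, sq_nonneg cA]
        rw [ht00]
        positivity
    have hstep1 : t ≤ 2 * P * (rnorm a ^ 2 + rnorm b' ^ 2) := by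
      have h1 : rnorm a' ^ 2 ≤ rnorm a ^ 2 := by
        rw [hna']; have := sq_nonneg α; linarith
      have h2 : rnorm a' ^ 2 + rnorm b' ^ 2 ≤ rnorm a ^ 2 + rnorm b' ^ 2 := by linarith
      have h3 : (0:ℝ) ≤ rnorm a' ^ 2 + rnorm b' ^ 2 := by positivity
      calc t ≤ (t + cA ^ 2) * (rnorm a' ^ 2 + rnorm b' ^ 2) := hDiv
        _ ≤ 2 * P * (rnorm a ^ 2 + rnorm b' ^ 2) :=
            mul_le_mul hXP h2 h3 (by linarith)
    have hb'P : s ^ 2 * rnorm b' ^ 2 ≤ P * rnorm a ^ 2 :=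
      le_trans hkb2 (mul_le_mul_of_nonneg_right ha0P (sq_nonneg _))
    have hsa : s ^ 2 * rnorm a ^ 2 ≤ P * rnorm a ^ 2 :=
      mul_le_mul_of_nonneg_right hsP (sq_nonneg _)
    have hstep2 : s ^ 2 * t ≤ 4 * P ^ 2 * rnorm a ^ 2 := by
      calc s ^ 2 * t ≤ s ^ 2 * (2 * P * (rnorm a ^ 2 + rnorm b' ^ 2)) :=
            mul_le_mul_of_nonneg_left hstep1 (sq_nonneg s)
        _ = 2 * P * (s ^ 2 * rnorm a ^ 2 + s ^ 2 * rnorm b' ^ 2) := by ring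
        _ ≤ 2 * P * (P * rnorm a ^ 2 + P * rnorm a ^ 2) :=
            mul_le_mul_of_nonneg_left (add_le_add hsa hb'P) (by linarith)
        _ = 4 * P ^ 2 * rnorm a ^ 2 := by ring
    have hgoal : ∑ i, (u i).re ^ 2 = rnorm a ^ 2 := (rnorm_sq a).symm
    rw [hgoal, div_le_iff₀ (pow_pos hsum_pos 4)]
    have hP4 : (a0 + b0) ^ 4 = P ^ 2 := by rw [hP]; ring
    rw [hP4]
    have hPA : (0:ℝ) ≤ P ^ 2 * rnorm a ^ 2 := by positivity
    linarith only [hstep2, hPA]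
  -- conclude via le_csInf
  apply le_csInf
  · exact (Set.nonempty_Icc.2 (by positivity)).image _
  · rintro x ⟨θ, _, rfl⟩
    have hu : cnorm (fun i => Complex.exp (θ * Complex.I) * v i) = 1 := by
      rw [cnorm]
      have : ∀ i, Complex.normSq (Complex.exp (θ * Complex.I) * v i) = Complex.normSq (v i) := by
        intro i
        rw [Complex.normSq_mul, ← Complex.sq_norm (Complex.exp _),
          Complex.norm_exp_ofReal_mul_I]
        norm_num
      rw [Finset.sum_congr rfl fun i _ => this i]
      exact hv
    have hnull' : A.mulVec (fun i => Complex.exp (θ * Complex.I) * v i) = 0 := by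
      have heq : (fun i => Complex.exp (θ * Complex.I) * v i)
          = Complex.exp (θ * Complex.I) • v := rfl
      rw [heq, Matrix.mulVec_smul, hnull, smul_zero]
    exact key _ hu hnull'
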